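/- Let G = (V, E, A) be a finite simple mixed graph. The map sending a cycle cover of G to its successor function (the function taking each vertex v to the vertex following v on the unique cycle of the cover through v) is a bijection between the set of cycle covers of G and the set of permutations π of V such that for every vertex v: π(v) ≠ v, π(π(v)) ≠ v, and either {v, π(v)} ∈ E or (v, π(v)) ∈ A. -/

import Mathlib

/-- A mixed graph on a vertex set `V`: a set `E` of undirected edges (unordered pairs of
distinct vertices) and a set `A` of directed edges (ordered pairs of distinct vertices). -/
structure MixedGraph (V : Type*) where
  E : Set (Sym2 V)
  A : Set (V × V)
  not_isDiag : ∀ e ∈ E, ¬ Sym2.IsDiag e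
  ne_of_mem : ∀ a ∈ A, Prod.fst a ≠ Prod.snd a

namespace MixedGraph

variable {V : Type*}

/-- `Adj G u v`: one may travel from `u` to `v` along a single edge of `G`
(an undirected edge `{u, v}` or a directed edge `(u, v)`). -/
def Adj (G : MixedGraph V) (u v : V) : Prop :=
  s(u, v) ∈ G.E ∨ (u, v) ∈ G.A

/-- A mixed graph is simple if no two vertices are joined by more than one edge of `E ∪ A`
(counting a directed edge in either direction). -/
def Simple (G : MixedGraph V) : Prop :=
  ∀ u v : V, ¬(s(u, v) ∈ G.E ∧ (u, v) ∈ G.A) ∧ ¬((u, v) ∈ G.A ∧ (v, u) ∈ G.A)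

/-- The degree of a vertex: the number of edges of `E ∪ A` incident to it. -/
noncomputable def degree (G : MixedGraph V) (v : V) : ℕ :=
  {e | e ∈ G.E ∧ v ∈ e}.ncard + {a | a ∈ G.A ∧ (a.1 = v ∨ a.2 = v)}.ncard

/-- `Inc G v u`: some edge of `G` (undirected, or directed in either direction)
joins `v` and `u`. -/
def Inc (G : MixedGraph V) (v u : V) : Prop :=
  s(v, u) ∈ G.E ∨ (v, u) ∈ G.A ∨ (u, v) ∈ G.A

/-- A cycle of a mixed graph, represented by the cyclic sequence of its vertices
(`Cycle V` is the quotient of lists by rotation): it is nonempty, its vertices are distinct,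
consecutive vertices are joined consistently by an edge, and its edges are distinct.
(In a simple graph an edge is determined by its endpoints, so distinctness of edges only
constrains 2-cycles: a 2-cycle must use two distinct edges joining its two vertices.) -/
def IsCycle (G : MixedGraph V) (c : Cycle V) : Prop :=
  c ≠ Cycle.nil ∧ Cycle.Nodup c ∧ Cycle.Chain G.Adj c ∧
    ∀ a b : V, c = (↑[a, b] : Cycle V) →
      (s(a, b) ∈ G.E ∧ (b, a) ∈ G.A) ∨ ((a, b) ∈ G.A ∧ s(a, b) ∈ G.E) ∨
        ((a, b) ∈ G.A ∧ (b, a) ∈ G.A)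

/-- A cycle cover of a mixed graph: a family of cycles such that every vertex is contained
in exactly one cycle of the family. -/
def IsCycleCover (G : MixedGraph V) (C : Set (Cycle V)) : Prop :=
  (∀ c ∈ C, G.IsCycle c) ∧ ∀ v : V, ∃! c, c ∈ C ∧ v ∈ c

end MixedGraph

/-- `CycleStep c u w`: the vertex `w` immediately follows `u` on the cycle `c`. -/
def CycleStep {V : Type*} (c : Cycle V) (u w : V) : Prop :=
  ∃ l : List V, c = (↑(u :: w :: l) : Cycle V)

/-- `CoverStep C u w`: some cycle of the family `C` traverses the step from `u` to `w`. -/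
def CoverStep {V : Type*} (C : Set (Cycle V)) (u w : V) : Prop :=
  ∃ c ∈ C, CycleStep c u w

section CycleHelpers

lemma getElem_idx_congr {α : Type*} {l : List α} {i j : ℕ} (h : i = j) (hi : i < l.length) :
    l[i]'hi = l[j]'(h ▸ hi) := by subst h; rfl

/-- Chain around a cycle list, index form. -/
lemma chain_append_singleton_iff {α : Type*} {r : α → α → Prop} (a : α) (m : List α) :
    List.Chain r a (m ++ [a]) ↔
    ∀ (i : ℕ) (hi : i < m.length + 1), r ((a::m)[i]'(by simpa using hi))
      ((a::m)[(i+1) % (m.length+1)]'(by simp only [List.length_cons]; exact Nat.mod_lt _ (by omega))) := by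
  have len : (m ++ [a]).length = m.length + 1 := by simp
  have key : ∀ (i : ℕ) (hi : i < m.length + 1),
      (m ++ [a])[i]'(by omega) = (a::m)[(i+1) % (m.length+1)]'(by simp only [List.length_cons]; exact Nat.mod_lt _ (by omega)) := by
    intro i hi
    rcases Nat.lt_or_ge i m.length with h1 | h1
    · rw [List.getElem_append_left h1,
        getElem_idx_congr (show (i+1) % (m.length+1) = i+1 from Nat.mod_eq_of_lt (by omega)),
        List.getElem_cons_succ]
    · have hi' : i = m.length := by omega
      subst hi'
      rw [getElem_idx_congr (show (m.length+1) % (m.length+1) = 0 from Nat.mod_self _),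
        List.getElem_cons_zero]
      simp
  have key2 : ∀ (i : ℕ) (hi : i < m.length),
      (m ++ [a])[i]'(by omega) = (a::m)[i+1]'(by simpa using hi) := by
    intro i hi
    rw [List.getElem_append_left hi, List.getElem_cons_succ]
  have key3 : ∀ (i : ℕ) (hi : i < m.length + 1),
      (a::(m ++ [a]))[i]'(by simp; omega) = (a::m)[i]'(by simpa using hi) := by
    intro i hi
    cases i with
    | zero => rfl
    | succ j =>
      simp only [List.getElem_cons_succ]
      exact List.getElem_append_left _
  show List.IsChain r (a :: (m ++ [a])) ↔ _
  rw [List.isChain_iff_getElem]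
  constructor
  · intro h i hi
    have := h i (by simp; omega)
    rw [key3 i hi, List.getElem_cons_succ, key i hi] at this
    exact this
  · intro h i hi
    have hi' : i < m.length + 1 := by simp at hi; omega
    rw [key3 i hi', List.getElem_cons_succ, key i hi']
    exact h i hi'

/-- A cycle chain condition is equivalent to relating each element to its successor. -/
lemma cycle_chain_iff_next {α : Type*} [DecidableEq α] {r : α → α → Prop} {l : List α}
    (hl : l.Nodup) :
    Cycle.Chain r (↑l : Cycle α) ↔ ∀ (x : α) (hx : x ∈ l), r x (l.next x hx) := by
  cases l with
  | nil =>
    rw [Cycle.coe_nil]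
    exact iff_of_true (Cycle.Chain.nil r) (by simp)
  | cons a m =>
    rw [show Cycle.Chain r (↑(a :: m) : Cycle α) ↔ List.Chain r a (m ++ [a]) from Iff.rfl,
      chain_append_singleton_iff]
    constructor
    · intro h x hx
      obtain ⟨i, hi, rfl⟩ := List.getElem_of_mem hx
      have h2 := h i (by simpa using hi)
      have h3 : (a::m).next ((a::m)[i]'hi) hx
          = (a::m)[(i+1) % (m.length+1)]'(by simp only [List.length_cons]; exact Nat.mod_lt _ (by omega)) := by
        have := List.next_getElem (a::m) hl i hi
        simpa using this
      rw [h3]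
      exact h2
    · intro h i hi
      have hi' : i < (a::m).length := by simpa using hi
      have hmem : (a::m)[i]'hi' ∈ a::m := List.getElem_mem _
      have h2 := h _ hmem
      have h3 : (a::m).next ((a::m)[i]'hi') hmem
          = (a::m)[(i+1) % (m.length+1)]'(by simp only [List.length_cons]; exact Nat.mod_lt _ (by omega)) := by
        have := List.next_getElem (a::m) hl i hi'
        simpa using this
      rw [h3] at h2
      exact h2

lemma mem_cycle_toFinset {α : Type*} [DecidableEq α] {c : Cycle α} {x : α} :
    x ∈ c.toFinset ↔ x ∈ c := by
  induction c using Quot.inductionOn with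
  | _ l => rw [Cycle.mk_eq_coe, Cycle.coe_toFinset, List.mem_toFinset, Cycle.mem_coe_iff]

end CycleHelpers

namespace MixedGraphAux

lemma adj_irrefl {V : Type*} (G : MixedGraph V) (v : V) : ¬ G.Adj v v := by
  rintro (h | h)
  · exact G.not_isDiag _ h (Sym2.mk_isDiag_iff.mpr rfl)
  · exact G.ne_of_mem _ h rfl

lemma cycle_nontrivial {V : Type*} [DecidableEq V] {G : MixedGraph V} {c : Cycle V}
    (h : G.IsCycle c) : c.Nontrivial := by
  obtain ⟨hnil, hnodup, hchain, -⟩ := h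
  induction c using Quot.inductionOn with
  | _ l =>
    rw [Cycle.mk_eq_coe] at hnil hnodup hchain ⊢
    rw [Cycle.nontrivial_coe_nodup_iff (Cycle.nodup_coe_iff.mp hnodup)]
    match l with
    | [] => exact absurd (Cycle.coe_nil ▸ rfl) hnil
    | [a] => exact absurd (Cycle.chain_singleton _ _ |>.mp hchain) (adj_irrefl G a)
    | a :: b :: m => simp

/-- Main structural lemma for cycle covers: the successor function is a fixed-point-free
"double-fixed-point-free" adjacency-respecting permutation, and the cover is recovered from
any permutation extending the successor function. -/
theorem cover_main {V : Type*} [Fintype V] [DecidableEq V]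
    (G : MixedGraph V) (hG : G.Simple) {C : Set (Cycle V)} (hC : G.IsCycleCover C)
    (f : V → V)
    (hf : ∀ c (hc : c ∈ C), ∀ v (hv : v ∈ c), f v = Cycle.next c ((hC.1 c hc).2.1) v hv) :
    (Function.Bijective f ∧ ∀ v : V, f v ≠ v ∧ f (f v) ≠ v ∧ G.Adj v (f v)) ∧
      ∀ p : Equiv.Perm V, (∀ v, p v = f v) →
        C = {c : Cycle V | ∃ v : V, c = (↑(p.toList v) : Cycle V)} := by
  have hfp : ∀ c (hc : c ∈ C) (v : V) (hv : v ∈ c),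
      f v = Cycle.formPerm c ((hC.1 c hc).2.1) v := fun c hc v hv =>
    (hf c hc v hv).trans (Cycle.formPerm_apply_mem_eq_next c _ v hv).symm
  have hmemnext : ∀ c (hc : c ∈ C) (v : V) (hv : v ∈ c), f v ∈ c := fun c hc v hv => by
    rw [hf c hc v hv]; exact Cycle.next_mem c _ v hv
  -- adjacency
  have hadj : ∀ v : V, G.Adj v (f v) := by
    intro v
    obtain ⟨c, ⟨hc, hv⟩, -⟩ := hC.2 v
    obtain ⟨l, hl⟩ := Quot.exists_rep c
    have hcl : c = (↑l : Cycle V) := by rw [← hl, Cycle.mk_eq_coe]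
    subst hcl
    have hnodup : l.Nodup := Cycle.nodup_coe_iff.mp ((hC.1 _ hc).2.1)
    have hchain := (hC.1 _ hc).2.2.1
    have hvl : v ∈ l := Cycle.mem_coe_iff.mp hv
    have hnext := (cycle_chain_iff_next hnodup).mp hchain v hvl
    have e : f v = l.next v hvl := by
      rw [hfp _ hc v hv]
      rw [show Cycle.formPerm (↑l) ((hC.1 _ hc).2.1) = l.formPerm from
        Cycle.formPerm_coe l hnodup]
      exact List.formPerm_apply_mem_eq_next hnodup v hvl
    rw [e]
    exact hnext
  have hne : ∀ v : V, f v ≠ v := fun v h => by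
    have hv := hadj v
    rw [h] at hv
    exact adj_irrefl G v hv
  -- injectivity
  have hinj : Function.Injective f := by
    intro u w huw
    obtain ⟨cu, ⟨hcu, hu⟩, -⟩ := hC.2 u
    obtain ⟨cw, ⟨hcw, hw⟩, -⟩ := hC.2 w
    obtain ⟨c0, hc0, huniq⟩ := hC.2 (f u)
    have h1 : cu = c0 := huniq cu ⟨hcu, hmemnext cu hcu u hu⟩
    have h2 : cw = c0 := huniq cw ⟨hcw, huw ▸ hmemnext cw hcw w hw⟩
    have hcc : cw = cu := h2.trans h1.symm
    subst hcc
    have e1 := hfp cw hcu u hu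
    have e2 := hfp cw hcu w hw
    exact (Cycle.formPerm cw ((hC.1 cw hcu).2.1)).injective
      (by rw [← e1, ← e2, huw])
  have hbij : Function.Bijective f := ⟨hinj, Finite.surjective_of_injective hinj⟩
  -- key: cycle through v equals toList
  have key : ∀ (p : Equiv.Perm V), (∀ v, p v = f v) →
      ∀ c (hc : c ∈ C) (v : V) (hv : v ∈ c), c = (↑(p.toList v) : Cycle V) := by
    intro p hp c hc v hv
    have hnd : c.Nodup := (hC.1 c hc).2.1
    have hnt : c.Nontrivial := cycle_nontrivial (hC.1 c hc)
    have hpmem : ∀ x, x ∈ c → p x ∈ c := fun x hx => by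
      rw [hp x]; exact hmemnext c hc x hx
    have hiter : ∀ k : ℕ, (p ^ k) v ∈ c := by
      intro k
      induction k with
      | zero => simpa using hv
      | succ k ih =>
        rw [pow_succ', Equiv.Perm.mul_apply]
        exact hpmem _ ih
    have hvsupp : v ∈ p.support := Equiv.Perm.mem_support.mpr (by rw [hp v]; exact hne v)
    have horb1 : ∀ x, p.SameCycle v x → x ∈ c := by
      intro x hx
      obtain ⟨k, -, rfl⟩ := hx.exists_pow_eq_of_mem_support hvsupp
      exact hiter k
    have hsupp : ∀ x, x ∈ c → x ∈ (Cycle.formPerm c hnd).support := by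
      intro x hx
      rw [Cycle.support_formPerm c hnd hnt, mem_cycle_toFinset]
      exact hx
    have hcyc : (Cycle.formPerm c hnd).IsCycle := Cycle.isCycle_formPerm c hnd hnt
    have hagree : ∀ k : ℕ, ((Cycle.formPerm c hnd) ^ k) v = (p ^ k) v := by
      intro k
      induction k with
      | zero => simp
      | succ k ih =>
        rw [pow_succ', pow_succ', Equiv.Perm.mul_apply, Equiv.Perm.mul_apply, ih]
        have hmem : (p ^ k) v ∈ c := hiter k
        rw [← hfp c hc _ hmem, hp]
    have horb2 : ∀ x, x ∈ c → p.SameCycle v x := by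
      intro x hx
      have h1 : (Cycle.formPerm c hnd).SameCycle v x :=
        hcyc.sameCycle (Equiv.Perm.mem_support.mp (hsupp v hv))
          (Equiv.Perm.mem_support.mp (hsupp x hx))
      obtain ⟨k, -, hk⟩ := h1.exists_pow_eq_of_mem_support (hsupp v hv)
      exact ⟨(k : ℤ), by rw [zpow_natCast, ← hagree k, hk]⟩
    have hform : Cycle.formPerm c hnd = p.cycleOf v := by
      apply Equiv.ext
      intro x
      by_cases hx : x ∈ c
      · calc Cycle.formPerm c hnd x = f x := (hfp c hc x hx).symm
          _ = p x := (hp x).symm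
          _ = p.cycleOf v x := ((horb2 x hx).cycleOf_apply).symm
      · rw [Cycle.formPerm_eq_self_of_notMem c hnd x hx,
          Equiv.Perm.cycleOf_apply_of_not_sameCycle (fun h => hx (horb1 x h))]
    have hform2 : Cycle.formPerm c hnd
        = Cycle.formPerm (↑(p.toList v) : Cycle V)
            (Cycle.nodup_coe_iff.mpr (Equiv.Perm.nodup_toList p v)) := by
      rw [hform]
      exact (Equiv.Perm.formPerm_toList p v).symm
    rcases Cycle.formPerm_eq_formPerm_iff.mp hform2 with h | ⟨h1, -⟩
    · exact h
    · exact absurd h1 (hnd.nontrivial_iff.mp hnt)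
  -- f (f v) ≠ v
  have hff : ∀ v : V, f (f v) ≠ v := by
    intro v hcontra
    set p : Equiv.Perm V := Equiv.ofBijective f hbij with hpdef
    have hp : ∀ w, p w = f w := fun _ => rfl
    obtain ⟨c, ⟨hc, hv⟩, -⟩ := hC.2 v
    have hc' : c = (↑(p.toList v) : Cycle V) := key p hp c hc v hv
    have hpow : ∀ k : ℕ, (p ^ k) v = v ∨ (p ^ k) v = f v := by
      intro k
      induction k with
      | zero => left; simp
      | succ k ih =>
        rw [pow_succ', Equiv.Perm.mul_apply]
        rcases ih with h' | h'
        · right; rw [h']; exact hp v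
        · left; rw [h']; rw [hp (f v)]; exact hcontra
    have hvsupp : v ∈ p.support := Equiv.Perm.mem_support.mpr (hne v)
    have hlv : ∀ y ∈ p.toList v, y = v ∨ y = f v := by
      intro y hy
      rw [Equiv.Perm.mem_toList_iff] at hy
      obtain ⟨k, -, rfl⟩ := hy.1.exists_pow_eq_of_mem_support hy.2
      exact hpow k
    have hsub : (p.toList v).toFinset ⊆ {v, f v} := by
      intro y hy
      rcases hlv y (List.mem_toFinset.mp hy) with h' | h' <;> simp [h']
    have hlen2 : (p.toList v).length ≤ 2 := by
      have h1 := Finset.card_le_card hsub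
      rw [List.card_toFinset, (Equiv.Perm.nodup_toList p v).dedup] at h1
      have h2 : ({v, f v} : Finset V).card ≤ 2 :=
        (Finset.card_insert_le v {f v}).trans (by simp)
      omega
    have hlen2' : 2 ≤ (p.toList v).length :=
      Equiv.Perm.two_le_length_toList_iff_mem_support.mpr hvsupp
    obtain ⟨a, b, hab⟩ := List.length_eq_two.mp (le_antisymm hlen2 hlen2')
    have hc2 : c = (↑[a, b] : Cycle V) := by rw [hc', hab]
    rcases (hC.1 c hc).2.2.2 a b hc2 with ⟨h1, h2⟩ | ⟨h1, h2⟩ | ⟨h1, h2⟩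
    · exact (hG b a).1 ⟨Sym2.eq_swap ▸ h1, h2⟩
    · exact (hG a b).1 ⟨h2, h1⟩
    · exact (hG a b).2 ⟨h1, h2⟩
  refine ⟨⟨hbij, fun v => ⟨hne v, hff v, hadj v⟩⟩, ?_⟩
  -- cover recovered from the permutation
  intro p hp
  ext c
  constructor
  · intro hc
    obtain ⟨x, y, hxy, hx, hy⟩ := cycle_nontrivial (hC.1 c hc)
    exact ⟨x, key p hp c hc x hx⟩
  · rintro ⟨v, rfl⟩
    obtain ⟨c', ⟨hc', hv'⟩, -⟩ := hC.2 v
    have := key p hp c' hc' v hv'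
    rw [← this]
    exact hc'

/-- Construction: every fixed-point-free, square-fixed-point-free adjacency-respecting
permutation gives rise to a cycle cover whose successor function is the permutation. -/
theorem perm_cover {V : Type*} [Fintype V] [DecidableEq V]
    (G : MixedGraph V) (hG : G.Simple) (p : Equiv.Perm V)
    (hp1 : ∀ v : V, p v ≠ v) (hp2 : ∀ v : V, p (p v) ≠ v) (hp3 : ∀ v : V, G.Adj v (p v)) :
    G.IsCycleCover {c : Cycle V | ∃ v : V, c = (↑(p.toList v) : Cycle V)} ∧
    ∀ (v x : V) (h : Cycle.Nodup (↑(p.toList v) : Cycle V))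
      (hx : x ∈ (↑(p.toList v) : Cycle V)),
      Cycle.next (↑(p.toList v) : Cycle V) h x hx = p x := by
  have hsupp : ∀ v : V, v ∈ p.support := fun v => Equiv.Perm.mem_support.mpr (hp1 v)
  have hnext : ∀ (v x : V) (h : Cycle.Nodup (↑(p.toList v) : Cycle V))
      (hx : x ∈ (↑(p.toList v) : Cycle V)),
      Cycle.next (↑(p.toList v) : Cycle V) h x hx = p x := by
    intro v x h hx
    have hx' : x ∈ p.toList v := Cycle.mem_coe_iff.mp hx
    rw [← Cycle.formPerm_apply_mem_eq_next _ h x hx,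
      show Cycle.formPerm (↑(p.toList v) : Cycle V) h = (p.toList v).formPerm from
        Cycle.formPerm_coe _ (Equiv.Perm.nodup_toList p v),
      Equiv.Perm.formPerm_toList]
    exact (Equiv.Perm.mem_toList_iff.mp hx').1.cycleOf_apply
  refine ⟨⟨?_, ?_⟩, hnext⟩
  · rintro c ⟨v, rfl⟩
    refine ⟨?_, ?_, ?_, ?_⟩
    · rw [Ne, Cycle.coe_eq_nil, Equiv.Perm.toList_eq_nil_iff]
      simpa using hsupp v
    · exact Cycle.nodup_coe_iff.mpr (Equiv.Perm.nodup_toList p v)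
    · rw [cycle_chain_iff_next (Equiv.Perm.nodup_toList p v)]
      intro x hx
      rw [Equiv.Perm.next_toList_eq_apply p v x hx]
      exact hp3 x
    · intro a b heq
      exfalso
      have hrot : p.toList v ~r [a, b] := Cycle.coe_eq_coe.mp heq
      have hmema : a ∈ p.toList v := hrot.mem_iff.mpr (by simp)
      have hmemb : b ∈ p.toList v := hrot.mem_iff.mpr (by simp)
      have hab : ([a, b] : List V).Nodup := hrot.nodup_iff.mp (Equiv.Perm.nodup_toList p v)
      have hpa : p a = b := by
        rw [← Equiv.Perm.next_toList_eq_apply p v a hmema,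
          List.isRotated_next_eq hrot (Equiv.Perm.nodup_toList p v) hmema]
        have h2 := List.next_getElem [a, b] hab 0 (by simp)
        simpa using h2
      have hpb : p b = a := by
        rw [← Equiv.Perm.next_toList_eq_apply p v b hmemb,
          List.isRotated_next_eq hrot (Equiv.Perm.nodup_toList p v) hmemb]
        have h2 := List.next_getElem [a, b] hab 1 (by simp)
        simpa using h2
      exact hp2 a (by rw [hpa, hpb])
  · intro v
    refine ⟨(↑(p.toList v) : Cycle V), ⟨⟨v, rfl⟩, ?_⟩, ?_⟩
    · exact Cycle.mem_coe_iff.mpr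
        (Equiv.Perm.mem_toList_iff.mpr ⟨Equiv.Perm.SameCycle.refl p v, hsupp v⟩)
    · rintro c ⟨⟨w, rfl⟩, hvc⟩
      have hm : v ∈ p.toList w := Cycle.mem_coe_iff.mp hvc
      rw [Equiv.Perm.mem_toList_iff] at hm
      exact Cycle.coe_eq_coe.mpr hm.1.toList_isRotated

end MixedGraphAux

/--
For a finite simple mixed graph `G`, the map sending a cycle cover of `G`
to its successor function (taking each vertex `v` to the vertex following `v` on the unique
cycle of the cover through `v`) is a bijection between the set of cycle covers of `G` and
the set of permutations `π` of `V` such that for every vertex `v`: `π v ≠ v`,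
`π (π v) ≠ v`, and either `{v, π v} ∈ E` or `(v, π v) ∈ A`.
-/



theorem stmt_1 {V : Type*} [Fintype V] [DecidableEq V]
    (G : MixedGraph V) (hG : G.Simple)
    (Φ : Set (Cycle V) → V → V)
    (hΦ : ∀ C (hC : G.IsCycleCover C), ∀ c (hc : c ∈ C), ∀ v (hv : v ∈ c),
      Φ C v = Cycle.next c ((hC.1 c hc).2.1) v hv) :
    Set.BijOn Φ {C : Set (Cycle V) | G.IsCycleCover C}
      {f : V → V | Function.Bijective f ∧
        ∀ v : V, f v ≠ v ∧ f (f v) ≠ v ∧ G.Adj v (f v)} := by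
  refine ⟨?_, ?_, ?_⟩
  · intro C hC
    exact (MixedGraphAux.cover_main G hG hC (Φ C) (hΦ C hC)).1
  · intro C₁ h₁ C₂ h₂ heq
    have m₁ := MixedGraphAux.cover_main G hG h₁ (Φ C₁) (hΦ C₁ h₁)
    have m₂ := MixedGraphAux.cover_main G hG h₂ (Φ C₂) (hΦ C₂ h₂)
    set p : Equiv.Perm V := Equiv.ofBijective (Φ C₁) m₁.1.1 with hpdef
    have e₁ := m₁.2 p (fun v => rfl)
    have e₂ := m₂.2 p (fun v => congrFun heq v)
    rw [e₁, e₂]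
  · intro f hf
    obtain ⟨hbij, hprops⟩ := hf
    set p : Equiv.Perm V := Equiv.ofBijective f hbij with hpdef
    obtain ⟨hcov, hnext⟩ := MixedGraphAux.perm_cover G hG p
      (fun v => (hprops v).1) (fun v => (hprops v).2.1) (fun v => (hprops v).2.2)
    refine ⟨{c : Cycle V | ∃ v : V, c = (↑(p.toList v) : Cycle V)}, hcov, ?_⟩
    funext v
    have hmem : v ∈ (↑(p.toList v) : Cycle V) :=
      Cycle.mem_coe_iff.mpr (Equiv.Perm.mem_toList_iff.mpr
        ⟨Equiv.Perm.SameCycle.refl p v, Equiv.Perm.mem_support.mpr (hprops v).1⟩)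
    have hc : (↑(p.toList v) : Cycle V) ∈ {c : Cycle V | ∃ w : V, c = (↑(p.toList w) : Cycle V)} :=
      ⟨v, rfl⟩
    rw [hΦ _ hcov _ hc v hmem, hnext v v _ hmem]
    rfl
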